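/- Let g be a Lie algebra with Levi decomposition g = s + r (s semisimple, r the solvable radical). Suppose B is a cyclic metric on g whose restriction to r is non-degenerate. Then [s, r] = 0 and B(s, r) = 0, so (g, B) is the orthogonal direct product of (s, B|_s) and (r, B|_r). -/

import Mathlib

open LieAlgebra Submodule

section Aux
/-- A semisimple Lie algebra is perfect. -/
lemma aux_semisimple_perfect (R L : Type*) [CommRing R] [LieRing L] [LieAlgebra R L]
    [LieAlgebra.IsSemisimple R L] :
    ⁅(⊤ : LieIdeal R L), (⊤ : LieIdeal R L)⁆ = ⊤ := by
  rw [eq_top_iff]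
  nth_rewrite 1 [← LieAlgebra.IsSemisimple.sSup_atoms_eq_top (R := R) (L := L)]
  apply sSup_le
  intro I hI
  have h1 : ⁅I, I⁆ ≤ I := LieSubmodule.lie_le_left I I
  have h2 : ⁅I, I⁆ = I := by
    rcases h1.lt_or_eq with h | h
    · exact absurd ((LieSubmodule.lie_abelian_iff_lie_self_eq_bot (I := I)).mpr (hI.2 _ h))
        (LieAlgebra.IsSemisimple.non_abelian_of_isAtom I hI)
    · exact h
  calc I = ⁅I, I⁆ := h2.symm
    _ ≤ ⁅⊤, ⊤⁆ := LieSubmodule.mono_lie le_top le_top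

lemma aux_span_brackets {R L : Type*} [CommRing R] [LieRing L] [LieAlgebra R L]
    (s : LieSubalgebra R L) [LieAlgebra.IsSemisimple R s] :
    s.toSubmodule ≤ Submodule.span R {z : L | ∃ a ∈ s, ∃ b ∈ s, ⁅a, b⁆ = z} := by
  intro x hx
  have hperf := aux_semisimple_perfect R s
  have hx' : (⟨x, hx⟩ : s) ∈ (⊤ : LieIdeal R s) := trivial
  rw [← hperf] at hx'
  have hx'' : (⟨x, hx⟩ : s) ∈ Submodule.span R
      { m : s | ∃ a ∈ (⊤ : LieIdeal R s), ∃ b ∈ (⊤ : LieIdeal R s), ⁅a, b⁆ = m } := by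
    rw [← LieSubmodule.lieIdeal_oper_eq_linear_span']
    exact hx'
  have hmap : x ∈ Submodule.map s.toSubmodule.subtype (Submodule.span R
      { m : s | ∃ a ∈ (⊤ : LieIdeal R s), ∃ b ∈ (⊤ : LieIdeal R s), ⁅a, b⁆ = m }) :=
    ⟨⟨x, hx⟩, hx'', rfl⟩
  rw [Submodule.map_span] at hmap
  refine Submodule.span_mono ?_ hmap
  rintro _ ⟨m, ⟨a, -, b, -, rfl⟩, rfl⟩
  exact ⟨a, a.2, b, b.2, rfl⟩

end Aux

theorem cyclic_metric_nondegenerate_on_radical_splits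
    {F L : Type*} [Field F] [LieRing L] [LieAlgebra F L] [FiniteDimensional F L]
    (hchar2 : ringChar F ≠ 2) (hchar3 : ringChar F ≠ 3)
    (s : LieSubalgebra F L) [LieAlgebra.IsSemisimple F s]
    (hlevi : IsCompl s.toSubmodule (LieAlgebra.radical F L).toSubmodule)
    (B : L →ₗ[F] L →ₗ[F] F)
    (hsymm : ∀ x y : L, B x y = B y x)
    (hcyc : ∀ x y z : L, B ⁅x, y⁆ z + B ⁅y, z⁆ x + B ⁅z, x⁆ y = 0)
    (hnondeg : ∀ x ∈ LieAlgebra.radical F L,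
      (∀ y ∈ LieAlgebra.radical F L, B x y = 0) → x = 0) :
    (∀ x ∈ s, ∀ y ∈ LieAlgebra.radical F L, ⁅x, y⁆ = 0) ∧
    (∀ x ∈ s, ∀ y ∈ LieAlgebra.radical F L, B x y = 0) := by
  classical
  set r : LieIdeal F L := LieAlgebra.radical F L with hrdef
  set R : Submodule F L := r.toSubmodule with hRdef
  have hmemR : ∀ x : L, x ∈ R ↔ x ∈ r := fun x => Iff.rfl
  have h2ne : (2 : F) ≠ 0 := fun h => hchar2 (CharP.ringChar_of_prime_eq_zero Nat.prime_two h)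
  have hrefl : B.IsRefl := fun x y h => by rw [hsymm]; exact h
  have hres : (LinearMap.BilinForm.restrict B R).Nondegenerate := by
    refine ⟨?_, ?_⟩ <;> rintro ⟨x, hx⟩ h <;> refine Subtype.ext (hnondeg x hx fun y hy => ?_)
    · simpa using h ⟨y, hy⟩
    · rw [hsymm]; simpa using h ⟨y, hy⟩
  have hcompl : IsCompl R (LinearMap.BilinForm.orthogonal B R) :=
    LinearMap.BilinForm.isCompl_orthogonal_of_restrict_nondegenerate hrefl hres
  set W : Submodule F L := LinearMap.BilinForm.orthogonal B R with hWdef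
  have hmemW : ∀ x : L, x ∈ W ↔ ∀ u ∈ R, B x u = 0 := by
    intro x
    rw [hWdef, LinearMap.BilinForm.mem_orthogonal_iff]
    constructor
    · intro h u hu; rw [hsymm]; exact h u hu
    · intro h u hu; show B u x = 0; rw [hsymm]; exact h u hu
  -- W is a subalgebra
  have hWb : ∀ x ∈ W, ∀ y ∈ W, ⁅x, y⁆ ∈ W := by
    intro x hx y hy
    rw [hmemW]
    intro u hu
    have hc := hcyc x y u
    have h1 : B ⁅y, u⁆ x = 0 := by
      rw [hsymm]; exact (hmemW x).mp hx _ (r.lie_mem hu)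
    have h2 : B ⁅u, x⁆ y = 0 := by
      rw [← lie_skew, map_neg, LinearMap.neg_apply, hsymm]
      simpa using (hmemW y).mp hy _ (r.lie_mem hu)
    linear_combination hc - h1 - h2
  -- symmetry of ad w on R for w ∈ W
  have hsym : ∀ x ∈ W, ∀ u ∈ R, ∀ v ∈ R, B ⁅x, u⁆ v = B ⁅x, v⁆ u := by
    intro x hx u hu v hv
    have hc := hcyc x u v
    have h1 : B ⁅u, v⁆ x = 0 := by
      rw [hsymm]; exact (hmemW x).mp hx _ (r.lie_mem hv)
    have h2 : B ⁅v, x⁆ u = - B ⁅x, v⁆ u := by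
      rw [← lie_skew, map_neg, LinearMap.neg_apply]
    linear_combination hc - h1 - h2
  -- brackets of W annihilate R
  have hA : ∀ x ∈ W, ∀ y ∈ W, ∀ u ∈ R, ⁅⁅x, y⁆, u⁆ = 0 := by
    intro x hx y hy u hu
    refine hnondeg _ (r.lie_mem hu) fun v hv => ?_
    have e1 : B ⁅⁅x, y⁆, u⁆ v = B ⁅⁅x, y⁆, v⁆ u := hsym _ (hWb x hx y hy) u hu v hv
    have a1 : B ⁅x, ⁅y, u⁆⁆ v = B ⁅y, ⁅x, v⁆⁆ u := by
      rw [hsym x hx _ (r.lie_mem hu) v hv, hsymm, hsym y hy u hu _ (r.lie_mem hv)]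
    have a2 : B ⁅y, ⁅x, u⁆⁆ v = B ⁅x, ⁅y, v⁆⁆ u := by
      rw [hsym y hy _ (r.lie_mem hu) v hv, hsymm, hsym x hx u hu _ (r.lie_mem hv)]
    have e2 : B ⁅⁅x, y⁆, u⁆ v = - B ⁅⁅x, y⁆, v⁆ u := by
      rw [lie_lie, map_sub, LinearMap.sub_apply, a1, a2, lie_lie, map_sub,
        LinearMap.sub_apply]
      ring
    have hc0 : B ⁅⁅x, y⁆, v⁆ u = 0 := by
      have h := e1.symm.trans e2
      have h2 : (2 : F) * B ⁅⁅x, y⁆, v⁆ u = 0 := by linear_combination h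
      exact (mul_eq_zero.mp h2).resolve_left h2ne
    rw [e1, hc0]
  have hspan := aux_span_brackets s
  set SB : Set L := {z : L | ∃ a ∈ s, ∃ b ∈ s, ⁅a, b⁆ = z} with hSBdef
  -- projection onto R along W
  set σ : L →ₗ[F] L := R.subtype ∘ₗ Submodule.projectionOnto R W hcompl with hσdef
  have hσR : ∀ x : L, σ x ∈ R := fun x => (Submodule.projectionOnto R W hcompl x).2
  have hσu : ∀ u ∈ R, σ u = u := by
    intro u hu
    show (R.subtype (Submodule.projectionOnto R W hcompl u)) = u
    rw [show u = ((⟨u, hu⟩ : R) : L) from rfl, Submodule.projectionOnto_apply_left hcompl]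
    rfl
  have hσw : ∀ w ∈ W, σ w = 0 := by
    intro w hw
    show (R.subtype (Submodule.projectionOnto R W hcompl w)) = 0
    rw [Submodule.projectionOnto_apply_of_mem_right hcompl hw]
    rfl
  have hσW : ∀ x : L, x - σ x ∈ W := by
    intro x
    rw [← Submodule.projectionOnto_apply_eq_zero_iff (p := R) (q := W) hcompl, map_sub]
    have h1 : (Submodule.projectionOnto R W hcompl) (σ x) = ⟨σ x, hσR x⟩ :=
      Submodule.projectionOnto_apply_left hcompl ⟨σ x, hσR x⟩
    have h2 : (⟨σ x, hσR x⟩ : R) = Submodule.projectionOnto R W hcompl x :=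
      Subtype.ext rfl
    rw [h1, h2, sub_self]
  -- [W, R] = 0
  have hC : ∀ w ∈ W, ∀ u ∈ R, ⁅w, u⁆ = 0 := by
    set SW : Set L := {z : L | ∃ a ∈ W, ∃ b ∈ W, ⁅a, b⁆ = z} with hSWdef
    set D : Submodule F L := Submodule.span F SW with hDdef
    have hDW : D ≤ W := by
      rw [hDdef, Submodule.span_le]
      rintro _ ⟨a, ha, b, hb, rfl⟩
      exact hWb a ha b hb
    have hWD : W ≤ D := by
      intro w hw
      have hwsum : w ∈ s.toSubmodule ⊔ R := by rw [hlevi.sup_eq_top]; trivial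
      obtain ⟨x, hx, u, hu, hxu⟩ := Submodule.mem_sup.mp hwsum
      have hx2 : x ∈ D ⊔ R := by
        refine Submodule.span_le.mpr ?_ (hspan hx)
        rintro _ ⟨a, ha, b, hb, rfl⟩
        have hdecomp : ⁅a, b⁆ = ⁅a - σ a, b - σ b⁆ + (⁅a - σ a, σ b⁆ + ⁅σ a, b⁆) := by
          simp only [lie_sub, sub_lie]
          abel
        rw [hdecomp]
        refine Submodule.add_mem _ (Submodule.mem_sup_left ?_) (Submodule.mem_sup_right ?_)
        · exact Submodule.subset_span ⟨_, hσW a, _, hσW b, rfl⟩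
        · refine Submodule.add_mem _ (r.lie_mem (hσR b)) ?_
          rw [← lie_skew]
          exact Submodule.neg_mem _ (r.lie_mem (hσR a))
      obtain ⟨d, hd, ρ, hρ, hdρ⟩ := Submodule.mem_sup.mp hx2
      have hwd : w - d ∈ R := by
        have : w - d = ρ + u := by rw [← hxu, ← hdρ]; abel
        rw [this]; exact Submodule.add_mem _ hρ hu
      have hwdW : w - d ∈ W := Submodule.sub_mem _ hw (hDW hd)
      have : w - d = 0 := by
        have := hcompl.disjoint
        rw [Submodule.disjoint_def] at this
        exact this _ hwd hwdW
      have : w = d := by linear_combination (norm := abel) this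
      rw [this]; exact hd
    have hDK : ∀ w ∈ D, ∀ u ∈ R, ⁅w, u⁆ = 0 := by
      intro w hw
      induction hw using Submodule.span_induction with
      | mem z hz =>
        obtain ⟨a, ha, b, hb, rfl⟩ := hz
        exact fun u hu => hA a ha b hb u hu
      | zero => intro u hu; simp
      | add a b _ _ ha hb => intro u hu; rw [add_lie, ha u hu, hb u hu, add_zero]
      | smul t a _ ha => intro u hu; rw [smul_lie, ha u hu, smul_zero]
    exact fun w hw u hu => hDK w (hWD hw) u hu
  -- σ is a Lie algebra morphism
  have hσlie : ∀ a b : L, σ ⁅a, b⁆ = ⁅σ a, σ b⁆ := by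
    intro a b
    have h1 : ⁅a - σ a, σ b⁆ = 0 := hC _ (hσW a) _ (hσR b)
    have h2 : ⁅σ a, b - σ b⁆ = 0 := by
      rw [← lie_skew, hC _ (hσW b) _ (hσR a), neg_zero]
    have hdecomp : ⁅a, b⁆ = ⁅a - σ a, b - σ b⁆ + ⁅σ a, σ b⁆ := by
      have expand : ⁅a, b⁆ = ⁅a - σ a, b - σ b⁆ + ⁅a - σ a, σ b⁆ + ⁅σ a, b - σ b⁆
          + ⁅σ a, σ b⁆ := by
        simp only [lie_sub, sub_lie]
        abel
      rw [expand, h1, h2]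
      abel
    rw [hdecomp, map_add, hσw _ (hWb _ (hσW a) _ (hσW b)), zero_add,
      hσu _ (r.lie_mem (hσR b))]
  -- the projection of s to R vanishes
  have hT : ∀ x ∈ s, σ x = 0 := by
    have key : ∀ k : ℕ, Submodule.map σ s.toSubmodule
        ≤ (LieAlgebra.derivedSeriesOfIdeal F L k r).toSubmodule := by
      intro k
      induction k with
      | zero =>
        rintro _ ⟨x, hx, rfl⟩
        rw [LieAlgebra.derivedSeriesOfIdeal_zero]
        exact hσR x
      | succ k ih =>
        rintro _ ⟨x, hx, rfl⟩
        rw [LieAlgebra.derivedSeriesOfIdeal_succ]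
        have hmap : σ x ∈ Submodule.map σ (Submodule.span F SB) := ⟨x, hspan hx, rfl⟩
        rw [Submodule.map_span] at hmap
        refine Submodule.span_le.mpr ?_ hmap
        rintro _ ⟨_, ⟨a, ha, b, hb, rfl⟩, rfl⟩
        rw [hσlie]
        have hma : σ a ∈ LieAlgebra.derivedSeriesOfIdeal F L k r := ih ⟨a, ha, rfl⟩
        have hmb : σ b ∈ LieAlgebra.derivedSeriesOfIdeal F L k r := ih ⟨b, hb, rfl⟩
        exact LieSubmodule.lie_mem_lie hma hmb
    obtain ⟨k, hk⟩ := LieAlgebra.IsSolvable.solvable F r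
    rw [LieIdeal.derivedSeries_eq_bot_iff] at hk
    intro x hx
    have hmem := key k ⟨x, hx, rfl⟩
    rw [hk] at hmem
    simpa using hmem
  have hsW : ∀ x ∈ s, x ∈ W := by
    intro x hx
    have h := hσW x
    rw [hT x hx, sub_zero] at h
    exact h
  refine ⟨fun x hx u hu => hC x (hsW x hx) u hu, fun x hx u hu => (hmemW x).mp (hsW x hx) u hu⟩
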